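/- For any dissimilarity map δ on X with |X| = n ≥ 4 and leaves a ≠ b, writing Z_δ(a,b) = ∑_{{x,y}} α(x,y) δ(x,y) (scaled by C(n-1,2)) as a linear function of the values δ(x,y) over unordered pairs, the coefficient α(x,y) equals -C(n-2,2) if {x,y} = {a,b}; equals (n-3)/2 if |{x,y} ∩ {a,b}| = 1; and equals -1 if {x,y} ∩ {a,b} = ∅. -/

import Mathlib

open Finset
open scoped Classical

/-- `w_δ(ij:kl) = (1/2)(δ(i,k)+δ(i,l)+δ(j,k)+δ(j,l)) - δ(i,j) - δ(k,l)`. -/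
noncomputable def njw {X : Type*} (δ : X → X → ℝ) (i j k l : X) : ℝ :=
  (δ i k + δ i l + δ j k + δ j l) / 2 - δ i j - δ k l

/-- The scaled Z-criterion `Z_δ(i,j) = ∑_{{k,l} ⊆ X\{i,j}} w_δ(ij:kl)`. -/
noncomputable def njZ {X : Type*} [Fintype X] [DecidableEq X]
    (δ : X → X → ℝ) (i j : X) : ℝ :=
  (1 / 2) * ∑ k ∈ (Finset.univ.erase i).erase j,
    ∑ l ∈ ((Finset.univ.erase i).erase j).erase k, njw δ i j k l

/-- the scaled Z-criterion as a linear function of the values `δ(x,y)`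
over unordered pairs `{x,y}` (written as half the sum over ordered pairs): the
coefficient of `δ(x,y)` is `-C(n-2,2)` if `{x,y} = {a,b}`, `(n-3)/2` if
`|{x,y} ∩ {a,b}| = 1`, and `-1` if `{x,y} ∩ {a,b} = ∅`. -/
theorem statement_13 {X : Type*} [Fintype X] [DecidableEq X]
    (hn : 4 ≤ Fintype.card X)
    (a b : X) (hab : a ≠ b)
    (δ : X → X → ℝ)
    (hsym : ∀ x y, δ x y = δ y x) (hdiag : ∀ x, δ x x = 0) :
    njZ δ a b =
      (1 / 2) * ∑ x : X, ∑ y ∈ Finset.univ.erase x,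
        (if (x = a ∧ y = b) ∨ (x = b ∧ y = a)
           then -(((Fintype.card X - 2).choose 2 : ℝ))
           else if x = a ∨ x = b ∨ y = a ∨ y = b
             then ((Fintype.card X : ℝ) - 3) / 2
             else -1) * δ x y := by
  classical
  set n := Fintype.card X with hncard
  set S : Finset X := (Finset.univ.erase a).erase b with hSdef
  have hbmem : b ∈ (Finset.univ.erase a) := Finset.mem_erase.mpr ⟨hab.symm, Finset.mem_univ b⟩
  have haS : a ∉ S := by simp [hSdef]
  have hbS : b ∉ S := by simp [hSdef]
  have hmemS : ∀ x, x ∈ S ↔ (x ≠ a ∧ x ≠ b) := by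
    intro x; simp [hSdef, and_comm]
  have hScard : S.card = n - 2 := by
    rw [hSdef, Finset.card_erase_of_mem hbmem,
      Finset.card_erase_of_mem (Finset.mem_univ a), Finset.card_univ]
    omega
  have hScardR : (S.card : ℝ) = (n : ℝ) - 2 := by
    rw [hScard, Nat.cast_sub (by omega)]; norm_num
  set A := ∑ y ∈ S, δ a y with hA
  set B := ∑ y ∈ S, δ b y with hB
  set D := ∑ k ∈ S, ∑ l ∈ S.erase k, δ k l with hD
  -- coefficient function
  set c : X → X → ℝ := fun x y =>
    (if (x = a ∧ y = b) ∨ (x = b ∧ y = a)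
       then -(((n - 2).choose 2 : ℝ))
       else if x = a ∨ x = b ∨ y = a ∨ y = b
         then ((n : ℝ) - 3) / 2
         else -1) with hc
  have hchoose : (((n - 2).choose 2 : ℕ) : ℝ) = ((n:ℝ) - 2) * ((n:ℝ) - 3) / 2 := by
    rw [Nat.cast_choose_two, Nat.cast_sub (by omega : 2 ≤ n)]
    push_cast
    ring
  -- LHS
  have hL : ∑ k ∈ S, ∑ l ∈ S.erase k, njw δ a b k l
      = ((n:ℝ) - 3) * (A + B) - ((n:ℝ) - 2) * ((n:ℝ) - 3) * δ a b - D := by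
    have hinner : ∀ k ∈ S, ∑ l ∈ S.erase k, njw δ a b k l
        = ((n:ℝ) - 3) * ((δ a k + δ b k) / 2 - δ a b)
          + (A + B - δ a k - δ b k) / 2 - ∑ l ∈ S.erase k, δ k l := by
      intro k hk
      have hkcard : ((S.erase k).card : ℝ) = (n:ℝ) - 3 := by
        rw [Finset.card_erase_of_mem hk, hScard]
        have : n - 2 - 1 = n - 3 := by omega
        rw [this, Nat.cast_sub (by omega)]; norm_num
      have hAe : ∑ l ∈ S.erase k, δ a l = A - δ a k := Finset.sum_erase_eq_sub hk
      have hBe : ∑ l ∈ S.erase k, δ b l = B - δ b k := Finset.sum_erase_eq_sub hk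
      have step : ∑ l ∈ S.erase k, njw δ a b k l
          = ∑ l ∈ S.erase k,
            (((δ a k + δ b k) / 2 - δ a b) + ((δ a l + δ b l) / 2 - δ k l)) := by
        apply Finset.sum_congr rfl
        intro l _
        simp only [njw]; ring
      rw [step, Finset.sum_add_distrib, Finset.sum_const, Finset.sum_sub_distrib,
        nsmul_eq_mul, hkcard]
      have : ∑ l ∈ S.erase k, (δ a l + δ b l) / 2
          = (∑ l ∈ S.erase k, δ a l + ∑ l ∈ S.erase k, δ b l) / 2 := by
        rw [← Finset.sum_div, Finset.sum_add_distrib]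
      rw [this, hAe, hBe]
      ring
    rw [Finset.sum_congr rfl hinner]
    rw [Finset.sum_sub_distrib, ← hD, Finset.sum_add_distrib]
    have h1 : ∑ k ∈ S, ((n:ℝ) - 3) * ((δ a k + δ b k) / 2 - δ a b)
        = ((n:ℝ) - 3) * ((A + B) / 2 - ((n:ℝ) - 2) * δ a b) := by
      rw [← Finset.mul_sum]
      congr 1
      rw [Finset.sum_sub_distrib, Finset.sum_const, ← Finset.sum_div,
        Finset.sum_add_distrib, ← hA, ← hB, nsmul_eq_mul, hScardR]
    have h2 : ∑ k ∈ S, (A + B - δ a k - δ b k) / 2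
        = (((n:ℝ) - 2) * (A + B) - A - B) / 2 := by
      rw [← Finset.sum_div]
      congr 1
      rw [Finset.sum_sub_distrib, Finset.sum_sub_distrib, Finset.sum_const,
        ← hA, ← hB, nsmul_eq_mul, hScardR]
    rw [h1, h2]
    ring
  -- RHS pieces
  have hea : Finset.univ.erase a = insert b S := (Finset.insert_erase hbmem).symm
  have heb : Finset.univ.erase b = insert a S := by
    have : S = (Finset.univ.erase b).erase a := by
      rw [hSdef, Finset.erase_right_comm]
    rw [this, Finset.insert_erase
      (Finset.mem_erase.mpr ⟨hab, Finset.mem_univ a⟩)]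
  have hfa : ∑ y ∈ Finset.univ.erase a, c a y * δ a y
      = -(((n:ℝ) - 2) * ((n:ℝ) - 3) / 2) * δ a b + ((n:ℝ) - 3) / 2 * A := by
    rw [hea, Finset.sum_insert hbS]
    have hcab : c a b = -(((n:ℝ) - 2) * ((n:ℝ) - 3) / 2) := by
      simp [hc, hchoose]
    have : ∑ y ∈ S, c a y * δ a y = ((n:ℝ) - 3) / 2 * A := by
      rw [hA, Finset.mul_sum]
      apply Finset.sum_congr rfl
      intro y hy
      obtain ⟨hya, hyb⟩ := (hmemS y).mp hy
      have : c a y = ((n:ℝ) - 3) / 2 := by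
        simp [hc, hya, hyb, hab]
      rw [this]
    rw [hcab, this]
  have hfb : ∑ y ∈ Finset.univ.erase b, c b y * δ b y
      = -(((n:ℝ) - 2) * ((n:ℝ) - 3) / 2) * δ a b + ((n:ℝ) - 3) / 2 * B := by
    rw [heb, Finset.sum_insert haS]
    have hcba : c b a = -(((n:ℝ) - 2) * ((n:ℝ) - 3) / 2) := by
      simp [hc, hchoose, hab.symm]
    have hba : δ b a = δ a b := (hsym b a)
    have : ∑ y ∈ S, c b y * δ b y = ((n:ℝ) - 3) / 2 * B := by
      rw [hB, Finset.mul_sum]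
      apply Finset.sum_congr rfl
      intro y hy
      obtain ⟨hya, hyb⟩ := (hmemS y).mp hy
      have : c b y = ((n:ℝ) - 3) / 2 := by
        simp [hc, hya, hyb, hab.symm]
      rw [this]
    rw [hcba, hba, this]
  have hfS : ∀ x ∈ S, ∑ y ∈ Finset.univ.erase x, c x y * δ x y
      = ((n:ℝ) - 3) / 2 * δ x a + ((n:ℝ) - 3) / 2 * δ x b
        - ∑ y ∈ S.erase x, δ x y := by
    intro x hx
    obtain ⟨hxa, hxb⟩ := (hmemS x).mp hx
    have hux : Finset.univ.erase x = insert a (insert b (S.erase x)) := by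
      have h1 : S.erase x = ((Finset.univ.erase x).erase a).erase b := by
        rw [hSdef, Finset.erase_right_comm (a := b) (b := x),
          Finset.erase_right_comm (a := a) (b := x)]
      rw [h1, Finset.insert_erase (Finset.mem_erase.mpr ⟨hab.symm,
          Finset.mem_erase.mpr ⟨Ne.symm hxb, Finset.mem_univ b⟩⟩),
        Finset.insert_erase (Finset.mem_erase.mpr ⟨Ne.symm hxa, Finset.mem_univ a⟩)]
    have hanotin : a ∉ insert b (S.erase x) := by
      simp only [Finset.mem_insert, Finset.mem_erase]
      push_neg
      exact ⟨hab, fun _ => haS⟩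
    have hbnotin : b ∉ S.erase x := fun h => hbS (Finset.mem_of_mem_erase h)
    rw [hux, Finset.sum_insert hanotin, Finset.sum_insert hbnotin]
    have hcxa : c x a = ((n:ℝ) - 3) / 2 := by
      simp [hc, hxa, hxb, hab.symm]
    have hcxb : c x b = ((n:ℝ) - 3) / 2 := by
      simp [hc, hxa, hxb, hab]
    have hrest : ∑ y ∈ S.erase x, c x y * δ x y = -∑ y ∈ S.erase x, δ x y := by
      rw [← Finset.sum_neg_distrib]
      apply Finset.sum_congr rfl
      intro y hy
      obtain ⟨hyx, hyS⟩ := Finset.mem_erase.mp hy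
      obtain ⟨hya, hyb⟩ := (hmemS y).mp hyS
      have : c x y = -1 := by
        simp [hc, hxa, hxb, hya, hyb]
      rw [this]; ring
    rw [hcxa, hcxb, hrest]
    ring
  -- assemble RHS
  have huniv : (Finset.univ : Finset X) = insert a (insert b S) := by
    rw [← hea, Finset.insert_erase (Finset.mem_univ a)]
  have hanotin2 : a ∉ insert b S := by
    simp only [Finset.mem_insert]
    push_neg
    exact ⟨hab, haS⟩
  have hR : ∑ x : X, ∑ y ∈ Finset.univ.erase x, c x y * δ x y
      = -(((n:ℝ) - 2) * ((n:ℝ) - 3)) * δ a b + ((n:ℝ) - 3) * (A + B) - D := by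
    rw [Finset.sum_congr huniv (fun x _ => rfl),
      Finset.sum_insert hanotin2, Finset.sum_insert hbS, hfa, hfb]
    have hSA : ∑ x ∈ S, δ x a = A := by
      rw [hA]; exact Finset.sum_congr rfl fun x _ => hsym x a
    have hSB : ∑ x ∈ S, δ x b = B := by
      rw [hB]; exact Finset.sum_congr rfl fun x _ => hsym x b
    rw [Finset.sum_congr rfl hfS, Finset.sum_sub_distrib, Finset.sum_add_distrib,
      ← Finset.mul_sum, ← Finset.mul_sum, hSA, hSB, ← hD]
    ring
  -- combine
  rw [njZ, ← hSdef, hL]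
  have : ∑ x : X, ∑ y ∈ Finset.univ.erase x,
      (if (x = a ∧ y = b) ∨ (x = b ∧ y = a)
         then -(((n - 2).choose 2 : ℝ))
         else if x = a ∨ x = b ∨ y = a ∨ y = b
           then ((n : ℝ) - 3) / 2
           else -1) * δ x y
      = ∑ x : X, ∑ y ∈ Finset.univ.erase x, c x y * δ x y := rfl
  rw [this, hR]
  ring
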